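/- For every finite group G and every positive even integer N, the quantum double ground state Ω on the N × N square-lattice torus satisfies Λ_max(Ω)² = |G|^{−(N²−1)}; that is, its geometric entanglement of spins (each edge being one party) is E_G(Ω) = α·|V| − log₂|G|, where α = log₂|G| and |V| = N² is the number of vertices. -/

import Mathlib

set_option linter.unusedSectionVars false
set_option maxHeartbeats 1000000


open scoped BigOperators
open scoped Classical

noncomputable section

namespace GeomEnt

/-- The ℓ² inner product of amplitude functions on qudits indexed by `ι` with local
configuration alphabet `A`. -/
def qInner {ι A : Type} [Fintype ι] [Fintype A] (φ ψ : (ι → A) → ℂ) : ℂ :=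
  ∑ x : ι → A, (starRingEnd ℂ) (φ x) * ψ x

/-- A product state: each site carries a unit-norm local amplitude function. -/
def IsProductState {ι A : Type} [Fintype ι] [Fintype A] (Φ : (ι → A) → ℂ) : Prop :=
  ∃ φ : ι → A → ℂ,
    (∀ i, ∑ g : A, ‖φ i g‖ ^ 2 = 1) ∧
    ∀ x, Φ x = ∏ i, φ i (x i)

def LambdaMax {ι A : Type} [Fintype ι] [Fintype A] (ψ : (ι → A) → ℂ) : ℝ :=
  sSup { r : ℝ | ∃ Φ, IsProductState Φ ∧ r = ‖qInner Φ ψ‖ }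

def EG {ι A : Type} [Fintype ι] [Fintype A] (ψ : (ι → A) → ℂ) : ℝ :=
  - Real.logb 2 (LambdaMax ψ ^ 2)

/-- The pure-gauge configurations of the quantum double model on the N × N torus:
edges (v,0) point from v to v+(1,0) and edges (v,1) from v to v+(0,1). -/
def Spure (G : Type) [Group G] (N : ℕ) : Set ((ZMod N × ZMod N) × Fin 2 → G) :=
  { x | ∃ f : ZMod N × ZMod N → G,
      ∀ v : ZMod N × ZMod N,
        x (v, 0) = f (v + (1, 0)) * (f v)⁻¹ ∧ x (v, 1) = f (v + (0, 1)) * (f v)⁻¹ }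

/-- The quantum double ground state: uniform superposition over pure-gauge
configurations. -/
def Omega (G : Type) [Group G] (N : ℕ) [NeZero N] :
    ((ZMod N × ZMod N) × Fin 2 → G) → ℂ :=
  fun x => if x ∈ Spure G N then (((Real.sqrt (Nat.card (Spure G N)))⁻¹ : ℝ) : ℂ) else 0

section Aux

variable {G : Type} [Group G] [Fintype G] {N : ℕ} [NeZero N]

private lemma quot_eq {p q p' q' : G} (h : p * q⁻¹ = p' * q'⁻¹) :
    p'⁻¹ * p = q'⁻¹ * q := by
  have h1 : p = p' * (q'⁻¹ * q) := by
    rw [← mul_assoc, ← h, inv_mul_cancel_right]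
  rw [h1, inv_mul_cancel_left]

private lemma quot_eq' {p q p' q' : G} (h : p'⁻¹ * p = q'⁻¹ * q) :
    p * q⁻¹ = p' * q'⁻¹ := by
  have h1 : p = p' * (q'⁻¹ * q) := by rw [← h, mul_inv_cancel_left]
  rw [h1]; simp [mul_assoc]

/-- the "tree part" of the edges -/
def PT (N : ℕ) : (ZMod N × ZMod N) × Fin 2 → Prop :=
  fun e => if e.1.1 + e.1.2 + 1 = 0 then e.2 = 1 else e.2 = 0

lemma constProp {X : Type} (c : ZMod N × ZMod N → X)
    (hh : ∀ i j : ZMod N, i + j + 1 ≠ 0 → c (i + 1, j) = c (i, j))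
    (hv : ∀ j : ZMod N, c (-j - 1, j + 1) = c (-j - 1, j)) :
    ∀ p q : ZMod N × ZMod N, c p = c q := by
  have aux : ∀ k : ℕ, k < N → ∀ j : ZMod N, c (-j + (k : ZMod N), j) = c (-j, j) := by
    intro k
    induction k with
    | zero => intro _ j; simp
    | succ k ih =>
      intro hk j
      have hk' : k < N := Nat.lt_of_succ_lt hk
      have hcast : (-j + ((k + 1 : ℕ) : ZMod N)) = (-j + (k : ZMod N)) + 1 := by
        push_cast; ring
      rw [hcast]
      have hne : (-j + (k : ZMod N)) + j + 1 ≠ 0 := by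
        intro h0
        have h1 : ((k + 1 : ℕ) : ZMod N) = 0 := by push_cast; linear_combination h0
        have h2 := ZMod.val_cast_of_lt hk
        rw [h1, ZMod.val_zero] at h2
        exact (Nat.succ_ne_zero k) h2.symm
      rw [hh _ j hne]
      exact ih hk' j
  have step1 : ∀ j i : ZMod N, c (i, j) = c (-j, j) := by
    intro j i
    have h1 : -j + (((i + j).val : ℕ) : ZMod N) = i := by
      rw [ZMod.natCast_rightInverse (i + j)]; ring
    have := aux (i + j).val (ZMod.val_lt _) j
    rwa [h1] at this
  have step2 : ∀ (jn : ℕ) (i : ZMod N), c (i, (jn : ZMod N)) = c (0, 0) := by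
    intro jn
    induction jn with
    | zero =>
      intro i
      have := step1 (0 : ZMod N) i
      simpa using this
    | succ jn ih =>
      intro i
      have hcast : ((jn + 1 : ℕ) : ZMod N) = (jn : ZMod N) + 1 := by push_cast; ring
      rw [hcast]
      have h1 : c (i, (jn : ZMod N) + 1) = c (-((jn : ZMod N) + 1), (jn : ZMod N) + 1) :=
        step1 _ i
      have h2 : -((jn : ZMod N) + 1) = -(jn : ZMod N) - 1 := by ring
      rw [h1, h2, hv (jn : ZMod N)]
      exact ih _
  intro p q
  have hp : c p = c (0, 0) := by
    have : p = (p.1, ((p.2.val : ℕ) : ZMod N)) := by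
      rw [ZMod.natCast_rightInverse p.2]
    rw [this]; exact step2 _ _
  have hq : c q = c (0, 0) := by
    have : q = (q.1, ((q.2.val : ℕ) : ZMod N)) := by
      rw [ZMod.natCast_rightInverse q.2]
    rw [this]; exact step2 _ _
  rw [hp, hq]

end Aux

section Inj

variable {G : Type} [Group G] [Fintype G] {N : ℕ} [NeZero N]

lemma spure_inj_on_T {x x' : (ZMod N × ZMod N) × Fin 2 → G}
    (hx : x ∈ Spure G N) (hx' : x' ∈ Spure G N)
    (hagree : ∀ e, PT N e → x e = x' e) : x = x' := by
  obtain ⟨f, hf⟩ := hx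
  obtain ⟨f', hf'⟩ := hx'
  set c : ZMod N × ZMod N → G := fun v => (f' v)⁻¹ * f v with hc
  have hadd0 : ∀ i j : ZMod N, ((i, j) : ZMod N × ZMod N) + (1, 0) = (i + 1, j) := by
    intro i j; simp [Prod.ext_iff]
  have hadd1 : ∀ i j : ZMod N, ((i, j) : ZMod N × ZMod N) + (0, 1) = (i, j + 1) := by
    intro i j; simp [Prod.ext_iff]
  have hh : ∀ i j : ZMod N, i + j + 1 ≠ 0 → c (i + 1, j) = c (i, j) := by
    intro i j hij
    have hPT : PT N ((i, j), 0) := by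
      unfold PT; rw [if_neg hij]
    have hxe := hagree _ hPT
    rw [(hf (i, j)).1, (hf' (i, j)).1, hadd0] at hxe
    exact quot_eq hxe
  have hv : ∀ j : ZMod N, c (-j - 1, j + 1) = c (-j - 1, j) := by
    intro j
    have hcond : (-j - 1) + j + 1 = 0 := by ring
    have hPT : PT N ((-j - 1, j), 1) := by
      unfold PT; rw [if_pos hcond]
    have hxe := hagree _ hPT
    rw [(hf (-j - 1, j)).2, (hf' (-j - 1, j)).2, hadd1] at hxe
    exact quot_eq hxe
  have hcc := constProp c hh hv
  funext e
  obtain ⟨v, d⟩ := e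
  fin_cases d
  · show x (v, 0) = x' (v, 0)
    rw [(hf v).1, (hf' v).1]
    exact quot_eq' (hcc (v + (1, 0)) v)
  · show x (v, 1) = x' (v, 1)
    rw [(hf v).2, (hf' v).2]
    exact quot_eq' (hcc (v + (0, 1)) v)

lemma spure_inj_on_C {x x' : (ZMod N × ZMod N) × Fin 2 → G}
    (hx : x ∈ Spure G N) (hx' : x' ∈ Spure G N)
    (hagree : ∀ e, ¬ PT N e → x e = x' e) : x = x' := by
  obtain ⟨f, hf⟩ := hx
  obtain ⟨f', hf'⟩ := hx'
  set c : ZMod N × ZMod N → G := fun v => (f' v)⁻¹ * f v with hc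
  set c' : ZMod N × ZMod N → G := fun v => c (v.2, v.1) with hc'
  have hadd0 : ∀ i j : ZMod N, ((i, j) : ZMod N × ZMod N) + (1, 0) = (i + 1, j) := by
    intro i j; simp [Prod.ext_iff]
  have hadd1 : ∀ i j : ZMod N, ((i, j) : ZMod N × ZMod N) + (0, 1) = (i, j + 1) := by
    intro i j; simp [Prod.ext_iff]
  have hh : ∀ a b : ZMod N, a + b + 1 ≠ 0 → c' (a + 1, b) = c' (a, b) := by
    intro a b hab
    have hcond : (b : ZMod N) + a + 1 ≠ 0 := by
      intro h0; exact hab (by linear_combination h0)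
    have hPT : ¬ PT N ((b, a), 1) := by
      unfold PT; rw [if_neg hcond]; simp
    have hxe := hagree _ hPT
    rw [(hf (b, a)).2, (hf' (b, a)).2, hadd1] at hxe
    exact quot_eq hxe
  have hv : ∀ b : ZMod N, c' (-b - 1, b + 1) = c' (-b - 1, b) := by
    intro b
    have hcond : (b : ZMod N) + (-b - 1) + 1 = 0 := by ring
    have hPT : ¬ PT N ((b, -b - 1), 0) := by
      unfold PT; rw [if_pos hcond]; simp
    have hxe := hagree _ hPT
    rw [(hf (b, -b - 1)).1, (hf' (b, -b - 1)).1, hadd0] at hxe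
    exact quot_eq hxe
  have hcc' := constProp c' hh hv
  have hcc : ∀ p q : ZMod N × ZMod N, c p = c q := by
    intro p q
    have := hcc' (p.2, p.1) (q.2, q.1)
    simpa [hc'] using this
  funext e
  obtain ⟨v, d⟩ := e
  fin_cases d
  · show x (v, 0) = x' (v, 0)
    rw [(hf v).1, (hf' v).1]
    exact quot_eq' (hcc (v + (1, 0)) v)
  · show x (v, 1) = x' (v, 1)
    rw [(hf v).2, (hf' v).2]
    exact quot_eq' (hcc (v + (0, 1)) v)

end Inj

section Key

variable {G : Type} [Group G] [Fintype G] {N : ℕ} [NeZero N]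

lemma masked_sum_le (P : (ZMod N × ZMod N) × Fin 2 → Prop) [DecidablePred P]
    (hinj : ∀ x ∈ Spure G N, ∀ x' ∈ Spure G N, (∀ e, P e → x e = x' e) → x = x')
    (c : (ZMod N × ZMod N) × Fin 2 → G → ℝ)
    (hc0 : ∀ i g, 0 ≤ c i g) (hcs : ∀ i, ∑ g : G, c i g = 1) :
    ∑ x ∈ Finset.univ.filter (· ∈ Spure G N),
      ∏ i ∈ Finset.univ.filter P, c i (x i) ≤ 1 := by
  classical
  set mask : ((ZMod N × ZMod N) × Fin 2 → G) → ((ZMod N × ZMod N) × Fin 2 → G) :=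
    fun x i => if P i then x i else 1 with hmask
  set t : (ZMod N × ZMod N) × Fin 2 → Finset G :=
    fun i => if P i then (Finset.univ : Finset G) else {1} with ht
  set h : (ZMod N × ZMod N) × Fin 2 → G → ℝ :=
    fun i g => if P i then c i g else 1 with hh
  have hrw : ∀ x : (ZMod N × ZMod N) × Fin 2 → G,
      ∏ i ∈ Finset.univ.filter P, c i (x i) = ∏ i, h i (mask x i) := by
    intro x
    rw [← Finset.prod_filter_mul_prod_filter_not Finset.univ P (fun i => h i (mask x i))]
    have h1 : ∏ i ∈ Finset.univ.filter P, h i (mask x i)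
        = ∏ i ∈ Finset.univ.filter P, c i (x i) := by
      refine Finset.prod_congr rfl ?_
      intro i hi
      have hPi := (Finset.mem_filter.mp hi).2
      simp [hh, hmask, if_pos hPi]
    have h2 : ∏ i ∈ Finset.univ.filter (fun i => ¬ P i), h i (mask x i) = 1 := by
      refine Finset.prod_eq_one ?_
      intro i hi
      have hPi := (Finset.mem_filter.mp hi).2
      simp [hh, if_neg hPi]
    rw [h1, h2, mul_one]
  have hinj' : ∀ x ∈ Finset.univ.filter (· ∈ Spure G N),
      ∀ y ∈ Finset.univ.filter (· ∈ Spure G N), mask x = mask y → x = y := by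
    intro x hxmem y hymem hmxy
    have hx : x ∈ Spure G N := (Finset.mem_filter.mp hxmem).2
    have hy : y ∈ Spure G N := (Finset.mem_filter.mp hymem).2
    refine hinj x hx y hy ?_
    intro e hPe
    have := congrFun hmxy e
    simpa [hmask, if_pos hPe] using this
  calc ∑ x ∈ Finset.univ.filter (· ∈ Spure G N), ∏ i ∈ Finset.univ.filter P, c i (x i)
      = ∑ x ∈ Finset.univ.filter (· ∈ Spure G N), ∏ i, h i (mask x i) :=
        Finset.sum_congr rfl (fun x _ => hrw x)
    _ = ∑ y ∈ (Finset.univ.filter (· ∈ Spure G N)).image mask, ∏ i, h i (y i) :=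
        (Finset.sum_image (f := fun y => ∏ i, h i (y i)) hinj').symm
    _ ≤ ∑ y ∈ Fintype.piFinset t, ∏ i, h i (y i) := by
        refine Finset.sum_le_sum_of_subset_of_nonneg ?_ ?_
        · intro y hy
          obtain ⟨x, _, rfl⟩ := Finset.mem_image.mp hy
          rw [Fintype.mem_piFinset]
          intro i
          by_cases hPi : P i
          · simp [hmask, ht, if_pos hPi]
          · simp [hmask, ht, if_neg hPi]
        · intro y _ _
          refine Finset.prod_nonneg ?_
          intro i _
          by_cases hPi : P i
          · simp only [hh, if_pos hPi]; exact hc0 i _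
          · simp [hh, if_neg hPi]
    _ = ∏ i, ∑ g ∈ t i, h i g := (Finset.prod_univ_sum t h).symm
    _ = 1 := by
        refine Finset.prod_eq_one ?_
        intro i _
        by_cases hPi : P i
        · simp only [ht, hh, if_pos hPi]
          exact hcs i
        · simp [ht, hh, if_neg hPi]

lemma key_sum_le' (a : (ZMod N × ZMod N) × Fin 2 → G → ℝ)
    (ha0 : ∀ i g, 0 ≤ a i g) (has : ∀ i, ∑ g : G, (a i g) ^ 2 = 1) :
    ∑ x ∈ Finset.univ.filter (· ∈ Spure G N), ∏ i, a i (x i) ≤ 1 := by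
  classical
  set A : ((ZMod N × ZMod N) × Fin 2 → G) → ℝ :=
    fun x => ∏ i ∈ Finset.univ.filter (PT N), a i (x i) with hA
  set B : ((ZMod N × ZMod N) × Fin 2 → G) → ℝ :=
    fun x => ∏ i ∈ Finset.univ.filter (fun e => ¬ PT N e), a i (x i) with hB
  have hAB : ∀ x, ∏ i, a i (x i) = A x * B x := by
    intro x
    rw [hA, hB]
    exact (Finset.prod_filter_mul_prod_filter_not Finset.univ (PT N) _).symm
  have hA2 : ∑ x ∈ Finset.univ.filter (· ∈ Spure G N), A x ^ 2 ≤ 1 := by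
    have : ∀ x, A x ^ 2 = ∏ i ∈ Finset.univ.filter (PT N), (a i (x i)) ^ 2 := by
      intro x; rw [hA, ← Finset.prod_pow]
    simp only [this]
    exact masked_sum_le (PT N) (fun x hx x' hx' hag => spure_inj_on_T hx hx' hag)
      (fun i g => (a i g) ^ 2) (fun i g => sq_nonneg _) has
  have hB2 : ∑ x ∈ Finset.univ.filter (· ∈ Spure G N), B x ^ 2 ≤ 1 := by
    have : ∀ x, B x ^ 2 = ∏ i ∈ Finset.univ.filter (fun e => ¬ PT N e), (a i (x i)) ^ 2 := by
      intro x; rw [hB, ← Finset.prod_pow]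
    simp only [this]
    exact masked_sum_le (fun e => ¬ PT N e) (fun x hx x' hx' hag => spure_inj_on_C hx hx' hag)
      (fun i g => (a i g) ^ 2) (fun i g => sq_nonneg _) has
  have hCS := Finset.sum_mul_sq_le_sq_mul_sq
    (Finset.univ.filter (· ∈ Spure G N)) A B
  have hnn : 0 ≤ ∑ x ∈ Finset.univ.filter (· ∈ Spure G N), A x * B x := by
    refine Finset.sum_nonneg ?_
    intro x _
    refine mul_nonneg ?_ ?_ <;> exact Finset.prod_nonneg (fun i _ => ha0 i _)
  have hre : ∑ x ∈ Finset.univ.filter (· ∈ Spure G N), ∏ i, a i (x i)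
      = ∑ x ∈ Finset.univ.filter (· ∈ Spure G N), A x * B x :=
    Finset.sum_congr rfl (fun x _ => hAB x)
  rw [hre]
  nlinarith [hCS, hA2, hB2, hnn,
    Finset.sum_nonneg (fun x (_ : x ∈ Finset.univ.filter (· ∈ Spure G N)) => sq_nonneg (A x)),
    Finset.sum_nonneg (fun x (_ : x ∈ Finset.univ.filter (· ∈ Spure G N)) => sq_nonneg (B x))]

end Key

section Card

variable {G : Type} [Group G] [Fintype G] {N : ℕ} [NeZero N]

lemma one_mem_spure : (1 : (ZMod N × ZMod N) × Fin 2 → G) ∈ Spure G N := by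
  refine ⟨fun _ => 1, ?_⟩
  intro v
  constructor <;> simp

def dmap (f : ZMod N × ZMod N → G) : (ZMod N × ZMod N) × Fin 2 → G :=
  fun e => f (e.1 + (if e.2 = (0 : Fin 2) then ((1, 0) : ZMod N × ZMod N) else (0, 1)))
    * (f e.1)⁻¹

lemma dmap_mem_spure (f : ZMod N × ZMod N → G) : dmap f ∈ Spure G N := by
  refine ⟨f, ?_⟩
  intro v
  constructor <;> simp [dmap]

lemma dmap_apply0 (f : ZMod N × ZMod N → G) (v : ZMod N × ZMod N) :
    dmap f (v, 0) = f (v + (1, 0)) * (f v)⁻¹ := by simp [dmap]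

lemma dmap_apply1 (f : ZMod N × ZMod N → G) (v : ZMod N × ZMod N) :
    dmap f (v, 1) = f (v + (0, 1)) * (f v)⁻¹ := by simp [dmap]

lemma card_spure :
    Nat.card (Spure G N) = Fintype.card G ^ (N ^ 2 - 1) := by
  classical
  set Ψ : {f : ZMod N × ZMod N → G // f 0 = 1} → (Spure G N) :=
    fun f => ⟨dmap f.1, dmap_mem_spure f.1⟩ with hΨ
  have hadd0 : ∀ i j : ZMod N, ((i, j) : ZMod N × ZMod N) + (1, 0) = (i + 1, j) := by
    intro i j; simp [Prod.ext_iff]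
  have hadd1 : ∀ i j : ZMod N, ((i, j) : ZMod N × ZMod N) + (0, 1) = (i, j + 1) := by
    intro i j; simp [Prod.ext_iff]
  have hbij : Function.Bijective Ψ := by
    constructor
    · intro f f' hff
      have hdm : dmap f.1 = dmap f'.1 := congrArg Subtype.val hff
      set c : ZMod N × ZMod N → G := fun v => (f'.1 v)⁻¹ * f.1 v with hc
      have hh : ∀ i j : ZMod N, i + j + 1 ≠ 0 → c (i + 1, j) = c (i, j) := by
        intro i j _
        have := congrFun hdm ((i, j), 0)
        rw [dmap_apply0, dmap_apply0, hadd0] at this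
        exact quot_eq this
      have hv : ∀ j : ZMod N, c (-j - 1, j + 1) = c (-j - 1, j) := by
        intro j
        have := congrFun hdm ((-j - 1, j), 1)
        rw [dmap_apply1, dmap_apply1, hadd1] at this
        exact quot_eq this
      have hcc := constProp c hh hv
      have hzero : ((0, 0) : ZMod N × ZMod N) = 0 := rfl
      have hc0 : c (0, 0) = 1 := by
        rw [hc]; simp only [hzero, f.2, f'.2]; simp
      refine Subtype.ext (funext fun v => ?_)
      have : c v = 1 := by rw [hcc v (0, 0), hc0]
      have := inv_mul_eq_one.mp this
      exact this.symm
    · intro y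
      obtain ⟨f, hf⟩ := y.2
      have hf0 : (fun v => f v * (f 0)⁻¹) 0 = 1 := by simp
      refine ⟨⟨fun v => f v * (f 0)⁻¹, hf0⟩, ?_⟩
      refine Subtype.ext (funext fun e => ?_)
      obtain ⟨v, d⟩ := e
      fin_cases d
      · show dmap (fun v => f v * (f 0)⁻¹) (v, 0) = y.1 (v, 0)
        rw [dmap_apply0, (hf v).1]
        group
      · show dmap (fun v => f v * (f 0)⁻¹) (v, 1) = y.1 (v, 1)
        rw [dmap_apply1, (hf v).2]
        group
  have h1 : Nat.card (Spure G N) = Nat.card {f : ZMod N × ZMod N → G // f 0 = 1} :=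
    (Nat.card_congr (Equiv.ofBijective Ψ hbij)).symm
  have e2 : {f : ZMod N × ZMod N → G // f 0 = 1} ≃ ({v : ZMod N × ZMod N // v ≠ 0} → G) :=
    { toFun := fun F v => F.1 v.1
      invFun := fun h => ⟨fun v => if hv : v = 0 then 1 else h ⟨v, hv⟩, by simp⟩
      left_inv := by
        intro F
        refine Subtype.ext (funext fun v => ?_)
        by_cases hv : v = 0
        · simp [hv, F.2]
        · simp [hv]
      right_inv := by
        intro h
        funext v
        simp [v.2] }
  have h2 : Nat.card {f : ZMod N × ZMod N → G // f 0 = 1}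
      = Fintype.card G ^ Fintype.card {v : ZMod N × ZMod N // v ≠ 0} := by
    rw [Nat.card_congr e2, Nat.card_eq_fintype_card, Fintype.card_fun]
  have h3 : Fintype.card {v : ZMod N × ZMod N // v ≠ 0} = N ^ 2 - 1 := by
    have := Fintype.card_subtype_compl (fun v : ZMod N × ZMod N => v = 0)
    rw [Fintype.card_subtype_eq (0 : ZMod N × ZMod N)] at this
    have hcv : Fintype.card (ZMod N × ZMod N) = N ^ 2 := by
      rw [Fintype.card_prod, ZMod.card, sq]
    rw [hcv] at this
    exact this
  rw [h1, h2, h3]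

end Card

section Main

variable {G : Type} [Group G] [Fintype G] {N : ℕ} [NeZero N]

lemma key_sum_le (s : Finset ((ZMod N × ZMod N) × Fin 2 → G))
    (hs : ∀ x, x ∈ s ↔ x ∈ Spure G N) (a : (ZMod N × ZMod N) × Fin 2 → G → ℝ)
    (ha0 : ∀ i g, 0 ≤ a i g) (has : ∀ i, ∑ g : G, (a i g) ^ 2 = 1) :
    ∑ x ∈ s, ∏ i, a i (x i) ≤ 1 := by
  classical
  have hseq : s = Finset.univ.filter (· ∈ Spure G N) := by
    refine Finset.ext ?_
    intro x
    rw [hs x, Finset.mem_filter]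
    simp
  rw [hseq]
  exact key_sum_le' a ha0 has

lemma univ_norm {T : Type} (i1 i2 : Fintype T) :
    @Finset.univ T i1 = @Finset.univ T i2 := by
  cases Subsingleton.elim i1 i2; rfl

lemma omega_apply (x : (ZMod N × ZMod N) × Fin 2 → G) :
    Omega G N x = if x ∈ Spure G N
      then (((Real.sqrt (Nat.card (Spure G N)))⁻¹ : ℝ) : ℂ) else 0 := rfl

lemma abs_qInner_le (Φ : ((ZMod N × ZMod N) × Fin 2 → G) → ℂ)
    (hΦ : IsProductState Φ) :
    ‖qInner Φ (Omega G N)‖ ≤ (Real.sqrt (Nat.card (Spure G N)))⁻¹ := by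
  obtain ⟨φ, hn, hp⟩ := hΦ
  set r : ℝ := (Real.sqrt (Nat.card (Spure G N)))⁻¹ with hr
  have hr0 : 0 ≤ r := inv_nonneg.mpr (Real.sqrt_nonneg _)
  have habsΦ : ∀ x : (ZMod N × ZMod N) × Fin 2 → G,
      ‖Φ x‖ = ∏ i, ‖φ i (x i)‖ := by
    intro x; rw [hp x]; exact norm_prod _ _
  have h2 : ∀ x : (ZMod N × ZMod N) × Fin 2 → G,
      ‖(starRingEnd ℂ) (Φ x) * Omega G N x‖
      = if x ∈ Spure G N then (∏ i, ‖φ i (x i)‖) * r else 0 := by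
    intro x
    rw [norm_mul, Complex.norm_conj, habsΦ x, omega_apply]
    by_cases hx : x ∈ Spure G N
    · rw [if_pos hx, if_pos hx, Complex.norm_real, Real.norm_of_nonneg hr0]
    · rw [if_neg hx, if_neg hx, norm_zero, mul_zero]
  unfold qInner
  refine le_trans (norm_sum_le _ _) ?_
  rw [Finset.sum_congr rfl (fun x _ => h2 x), ← Finset.sum_filter, ← Finset.sum_mul]
  refine le_trans (mul_le_mul_of_nonneg_right
    (key_sum_le _ (fun x => by simp) (fun i g => ‖φ i g‖)
      (fun i g => norm_nonneg _) hn) hr0) ?_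
  rw [one_mul]

lemma delta_mem :
    (Real.sqrt (Nat.card (Spure G N)))⁻¹ ∈
      {r : ℝ | ∃ Φ, IsProductState Φ ∧ r = ‖qInner Φ (Omega G N)‖} := by
  classical
  set r : ℝ := (Real.sqrt (Nat.card (Spure G N)))⁻¹ with hrdef
  have hr0 : 0 ≤ r := inv_nonneg.mpr (Real.sqrt_nonneg _)
  set φ0 : (ZMod N × ZMod N) × Fin 2 → G → ℂ :=
    fun _ g => if g = 1 then 1 else 0 with hφ0
  set Φ : ((ZMod N × ZMod N) × Fin 2 → G) → ℂ :=
    fun x => ∏ i, φ0 i (x i) with hΦdef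
  have hps : IsProductState Φ := by
    refine ⟨φ0, ?_, fun x => rfl⟩
    intro i
    have : ∀ g : G, ‖φ0 i g‖ ^ 2 = if g = 1 then (1 : ℝ) else 0 := by
      intro g
      by_cases hg : g = 1
      · simp [hφ0, hg]
      · simp [hφ0, hg]
    rw [Finset.sum_congr rfl (fun g _ => this g)]
    rw [Fintype.sum_ite_eq' (1 : G) (fun _ => (1 : ℝ))]
  have hΦx : ∀ x : (ZMod N × ZMod N) × Fin 2 → G,
      Φ x = if x = 1 then 1 else 0 := by
    intro x
    by_cases hx : x = 1
    · subst hx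
      simp [hΦdef, hφ0]
    · rw [if_neg hx]
      obtain ⟨i, hi⟩ := Function.ne_iff.mp hx
      refine Finset.prod_eq_zero (Finset.mem_univ i) ?_
      have : x i ≠ 1 := hi
      simp [hφ0, this]
  have hsummand : ∀ x : (ZMod N × ZMod N) × Fin 2 → G,
      (starRingEnd ℂ) (Φ x) * Omega G N x
      = if x = 1 then Omega G N x else 0 := by
    intro x
    rw [hΦx x]
    by_cases hx : x = 1
    · rw [if_pos hx, if_pos hx, map_one, one_mul]
    · rw [if_neg hx, if_neg hx, map_zero, zero_mul]
  have hqi : qInner Φ (Omega G N) = ((r : ℝ) : ℂ) := by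
    unfold qInner
    rw [univ_norm _ inferInstance]
    rw [Finset.sum_congr rfl (fun x _ => hsummand x)]
    rw [Fintype.sum_ite_eq' (1 : (ZMod N × ZMod N) × Fin 2 → G) (fun x => Omega G N x)]
    rw [omega_apply, if_pos one_mem_spure]
  refine ⟨Φ, hps, ?_⟩
  rw [hqi, Complex.norm_real, Real.norm_of_nonneg hr0]

lemma lambdaMax_omega :
    LambdaMax (Omega G N) = (Real.sqrt (Nat.card (Spure G N)))⁻¹ := by
  set r : ℝ := (Real.sqrt (Nat.card (Spure G N)))⁻¹ with hrdef
  have hub : ∀ z ∈ {r : ℝ | ∃ Φ, IsProductState Φ ∧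
      r = ‖qInner Φ (Omega G N)‖}, z ≤ r := by
    rintro z ⟨Φ, hps, rfl⟩
    exact abs_qInner_le Φ hps
  have hmem := delta_mem (G := G) (N := N)
  exact le_antisymm (csSup_le ⟨r, hmem⟩ hub) (le_csSup ⟨r, hub⟩ hmem)

end Main


/-- for every finite group G and positive even N, the quantum double
ground state on the N × N torus has Λ_max² = |G|^{−(N²−1)}, i.e. geometric
entanglement of spins E_G = α·|V| − log₂|G| with α = log₂|G| and |V| = N². -/
theorem quantum_double_GE
    (G : Type) [Group G] [Fintype G] (N : ℕ) [NeZero N] (hpos : 0 < N)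
    (heven : Even N) :
    LambdaMax (Omega G N) ^ 2 = ((Fintype.card G : ℝ) ^ (N ^ 2 - 1))⁻¹ ∧
    EG (Omega G N) = ((N : ℝ) ^ 2) * Real.logb 2 (Fintype.card G) -
      Real.logb 2 (Fintype.card G) := by
  have hΛ : LambdaMax (Omega G N) = (Real.sqrt (Nat.card (Spure G N)))⁻¹ :=
    lambdaMax_omega
  have hq : ((Nat.card (Spure G N) : ℕ) : ℝ) = (Fintype.card G : ℝ) ^ (N ^ 2 - 1) := by
    rw [card_spure]; push_cast; ring
  have hqnn : (0 : ℝ) ≤ ((Nat.card (Spure G N) : ℕ) : ℝ) := Nat.cast_nonneg _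
  have h1 : LambdaMax (Omega G N) ^ 2 = ((Fintype.card G : ℝ) ^ (N ^ 2 - 1))⁻¹ := by
    rw [hΛ, inv_pow, Real.sq_sqrt hqnn, hq]
  refine ⟨h1, ?_⟩
  have hN2 : 1 ≤ N ^ 2 := Nat.one_le_pow _ _ hpos
  have hcast : ((N ^ 2 - 1 : ℕ) : ℝ) = (N : ℝ) ^ 2 - 1 := by
    rw [Nat.cast_sub hN2, Nat.cast_pow, Nat.cast_one]
  unfold EG
  rw [h1, Real.logb_inv, neg_neg, Real.logb_pow, hcast]
  ring

end GeomEnt
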